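/- Let h : ℝⁿ → ℝ be differentiable with L-Lipschitz gradient and strongly quasiconvex with modulus γ > 0, with global minimizer x̄. Then for all x ∈ ℝⁿ, ⟨∇h(x), x - x̄⟩ ≥ (γ/2)‖x - x̄‖² ≥ (γ/L)(h(x) - h(x̄)); in particular h satisfies the quasar-convexity inequality ⟨∇h(x), x - x̄⟩ ≥ κ(h(x) - h(x̄)) with κ = γ/L. -/

import Mathlib

set_option maxHeartbeats 1000000

open Filter Topology InnerProductSpace Set

theorem quasar_convexity_of_strongly_quasiconvex
    {n : ℕ} (h : EuclideanSpace ℝ (Fin n) → ℝ)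
    (g : EuclideanSpace ℝ (Fin n) → EuclideanSpace ℝ (Fin n))
    (hgrad : ∀ x, HasGradientAt h (g x) x)
    (L : ℝ) (hL : 0 < L) (hLip : ∀ x y, ‖g x - g y‖ ≤ L * ‖x - y‖)
    (γ : ℝ) (hγ : 0 < γ)
    (hsq : ∀ x y : EuclideanSpace ℝ (Fin n), ∀ lam : ℝ, lam ∈ Set.Icc (0:ℝ) 1 →
      h (lam • y + (1 - lam) • x) ≤
        max (h y) (h x) - lam * (1 - lam) * (γ / 2) * ‖x - y‖ ^ 2)
    (xbar : EuclideanSpace ℝ (Fin n)) (hmin : ∀ x, h xbar ≤ h x) :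
    ∀ x, (γ / 2) * ‖x - xbar‖ ^ 2 ≤ (inner ℝ (g x) (x - xbar) : ℝ) ∧
      (γ / L) * (h x - h xbar) ≤ (γ / 2) * ‖x - xbar‖ ^ 2 := by
  have hfd : ∀ x, HasFDerivAt h (toDual ℝ _ (g x)) x := fun x => (hgrad x).hasFDerivAt
  -- gradient at minimizer is zero
  have hgx0 : g xbar = 0 := by
    have hloc : IsLocalMin h xbar := Filter.Eventually.of_forall hmin
    have := hloc.hasFDerivAt_eq_zero (hfd xbar)
    have : toDual ℝ _ (g xbar) = toDual ℝ _ (0 : EuclideanSpace ℝ (Fin n)) := by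
      simpa using this
    exact (toDual ℝ _).injective this
  intro x
  set c : ℝ := (γ / 2) * ‖x - xbar‖ ^ 2 with hc
  constructor
  · -- Part 1
    set φ : ℝ → ℝ := fun t => h (x + t • (xbar - x)) with hφ
    have hline : ∀ t : ℝ, HasDerivAt (fun s : ℝ => x + s • (xbar - x)) (xbar - x) t := by
      intro t
      simpa using ((hasDerivAt_id t).smul_const (xbar - x)).const_add x
    have hder : HasDerivAt φ (inner ℝ (g x) (xbar - x) : ℝ) 0 := by
      have key := (hfd (x + (0:ℝ) • (xbar - x))).comp_hasDerivAt (0:ℝ) (hline 0)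
      have hx0 : x + (0:ℝ) • (xbar - x) = x := by simp
      rw [hx0] at key
      simp only [toDual_apply_apply] at key
      exact key
    have hslope : Tendsto (slope φ 0) (𝓝[>] (0:ℝ)) (𝓝 (inner ℝ (g x) (xbar - x) : ℝ)) :=
      (hasDerivAt_iff_tendsto_slope.1 hder).mono_left
        (nhdsWithin_mono _ (fun t ht => ne_of_gt ht))
    have hub : ∀ᶠ t in 𝓝[>] (0:ℝ), slope φ 0 t ≤ -(1 - t) * c := by
      filter_upwards [Ioo_mem_nhdsGT_of_mem (by norm_num : (0:ℝ) ∈ Ico (0:ℝ) 1)] with t ht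
      have ht0 : 0 < t := ht.1
      have ht1 : t < 1 := ht.2
      have key := hsq x xbar t ⟨le_of_lt ht0, le_of_lt ht1⟩
      have hmax : max (h xbar) (h x) = h x := max_eq_right (hmin x)
      have heq : t • xbar + (1 - t) • x = x + t • (xbar - x) := by
        module
      rw [hmax, heq] at key
      have : φ t - φ 0 ≤ t * (-(1 - t) * c) := by
        simp only [φ, zero_smul, add_zero]
        rw [hc]
        nlinarith [key]
      rw [slope_def_field, sub_zero, div_le_iff₀ ht0]
      nlinarith [this]
    have hlim2 : Tendsto (fun t : ℝ => -(1 - t) * c) (𝓝[>] (0:ℝ)) (𝓝 (-c)) := by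
      have hcont2 : Continuous fun t : ℝ => -(1 - t) * c := by continuity
      simpa using (hcont2.tendsto 0).mono_left nhdsWithin_le_nhds
    have hle : (inner ℝ (g x) (xbar - x) : ℝ) ≤ -c :=
      le_of_tendsto_of_tendsto hslope hlim2 hub
    have hinner : (inner ℝ (g x) (xbar - x) : ℝ) = -(inner ℝ (g x) (x - xbar) : ℝ) := by
      rw [← neg_sub x xbar, inner_neg_right]
    linarith [hle, hinner.symm.le, hinner.le]
  · -- Part 2: descent lemma
    set v : EuclideanSpace ℝ (Fin n) := x - xbar with hv
    set F : ℝ → ℝ := fun t => h (xbar + t • v) - (L / 2) * ‖v‖ ^ 2 * t ^ 2 with hF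
    have hlineF : ∀ t : ℝ, HasDerivAt (fun s : ℝ => xbar + s • v) v t := by
      intro t
      simpa using ((hasDerivAt_id t).smul_const v).const_add xbar
    have hFder : ∀ t : ℝ, HasDerivAt F
        ((inner ℝ (g (xbar + t • v)) v : ℝ) - (L * ‖v‖ ^ 2) * t) t := by
      intro t
      have h1 : HasDerivAt (fun s : ℝ => h (xbar + s • v))
          (inner ℝ (g (xbar + t • v)) v : ℝ) t := by
        have := (hfd (xbar + t • v)).comp_hasDerivAt t (hlineF t)
        simp only [toDual_apply_apply] at this
        exact this
      have h2 : HasDerivAt (fun s : ℝ => (L / 2) * ‖v‖ ^ 2 * s ^ 2)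
          ((L * ‖v‖ ^ 2) * t) t := by
        have := ((hasDerivAt_pow 2 t).const_mul ((L / 2) * ‖v‖ ^ 2))
        exact this.congr_deriv (by norm_num <;> ring)
      exact h1.sub h2
    have hnonpos : ∀ t ∈ interior (Icc (0:ℝ) 1),
        deriv F t ≤ 0 := by
      intro t ht
      rw [interior_Icc] at ht
      rw [(hFder t).deriv]
      have hb : (inner ℝ (g (xbar + t • v)) v : ℝ) ≤ L * t * ‖v‖ ^ 2 := by
        have : (inner ℝ (g (xbar + t • v)) v : ℝ) =
            (inner ℝ (g (xbar + t • v)) v : ℝ) - (inner ℝ (g xbar) v : ℝ) := by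
          rw [hgx0]; simp
        rw [this, ← inner_sub_left]
        calc (inner ℝ (g (xbar + t • v) - g xbar) v : ℝ)
            ≤ ‖g (xbar + t • v) - g xbar‖ * ‖v‖ := real_inner_le_norm _ _
          _ ≤ (L * ‖(xbar + t • v) - xbar‖) * ‖v‖ := by
              gcongr; exact hLip _ _
          _ = L * t * ‖v‖ ^ 2 := by
              rw [add_sub_cancel_left, norm_smul]
              simp [abs_of_nonneg ht.1.le]
              ring
      nlinarith [hb]
    have hcont : ContinuousOn F (Icc (0:ℝ) 1) :=
      fun t _ => ((hFder t).continuousAt).continuousWithinAt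
    have hanti : AntitoneOn F (Icc (0:ℝ) 1) :=
      antitoneOn_of_deriv_nonpos (convex_Icc 0 1) hcont
        (fun t ht => ((hFder t).differentiableAt).differentiableWithinAt) hnonpos
    have hF10 : F 1 ≤ F 0 := hanti (by norm_num) (by norm_num) (by norm_num)
    have hdesc : h x - h xbar ≤ (L / 2) * ‖x - xbar‖ ^ 2 := by
      have h0 : F 0 = h xbar := by simp [hF]
      have h1 : F 1 = h x - (L / 2) * ‖x - xbar‖ ^ 2 := by
        simp [hF, hv]
      rw [h0, h1] at hF10
      linarith
    have hγL : 0 < γ / L := div_pos hγ hL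
    calc (γ / L) * (h x - h xbar) ≤ (γ / L) * ((L / 2) * ‖x - xbar‖ ^ 2) := by
          exact mul_le_mul_of_nonneg_left hdesc hγL.le
      _ = c := by rw [hc]; field_simp; ring
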